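/- Let n ≥ 2, and let μ, λ be partitions of n, t a standard λ-tableau and u a standard μ-tableau. Suppose t is 1-minimal with respect to u, meaning: the restriction number of (u,t) is 1 (i.e., only the entry 1 occupies the same box in u and t), D(t) ⊊ D(u), the skew tableau t with entry 1 removed is 1-critical, and the empty initial segment condition is vacuous. Then μ < λ in the dominance order on partitions of n. -/

import Mathlib

/-- Partial sum `λ₁ + ⋯ + λ_k` of a 1-indexed sequence of parts. -/
def psum (lam : ℕ → ℕ) (k : ℕ) : ℕ := ∑ i ∈ Finset.Icc 1 k, lam i

/-- `lam` is a composition of `n` (1-indexed parts, extended by zeros). -/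
def IsComp (n : ℕ) (lam : ℕ → ℕ) : Prop :=
  lam 0 = 0 ∧ ∃ N, (∀ i, N < i → lam i = 0) ∧ psum lam N = n

/-- `lam` is a partition of `n` (weakly decreasing parts). -/
def IsPartition (n : ℕ) (lam : ℕ → ℕ) : Prop :=
  IsComp n lam ∧ ∀ i j, 1 ≤ i → i ≤ j → lam j ≤ lam i

/-- Dominance order in the paper's (column) convention: `lam` dominates `mu`
(written `mu ≤ lam`) iff every partial sum of `lam` is at most the
corresponding partial sum of `mu`. -/
def Dominates (lam mu : ℕ → ℕ) : Prop := ∀ k, psum lam k ≤ psum mu k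

/-- Row index of the box containing the entry `k`. -/
def rowT (p : ℕ → ℕ × ℕ) (k : ℕ) : ℕ := (p k).1
/-- Column index of the box containing the entry `k`. -/
def colT (p : ℕ → ℕ × ℕ) (k : ℕ) : ℕ := (p k).2

/-- `p` is the position function of a bijective filling of the skew diagram
`[lam] ∖ [mu]` (1-indexed rows and columns, `lam j` boxes in column `j`)
by the entries `a+1, …, a+n`. -/
def IsSkewTab (lam mu : ℕ → ℕ) (a n : ℕ) (p : ℕ → ℕ × ℕ) : Prop :=
  (∀ k ∈ Finset.Icc (a+1) (a+n),
      1 ≤ (p k).2 ∧ mu (p k).2 < (p k).1 ∧ (p k).1 ≤ lam (p k).2) ∧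
  (∀ k ∈ Finset.Icc (a+1) (a+n), ∀ l ∈ Finset.Icc (a+1) (a+n), p k = p l → k = l) ∧
  (∀ c : ℕ × ℕ, 1 ≤ c.2 → mu c.2 < c.1 → c.1 ≤ lam c.2 →
      ∃ k ∈ Finset.Icc (a+1) (a+n), p k = c)

/-- A straight-shape `lam`-tableau with entries `1, …, n`. -/
def IsTab (lam : ℕ → ℕ) (n : ℕ) (p : ℕ → ℕ × ℕ) : Prop :=
  IsSkewTab lam (fun _ => 0) 0 n p

/-- Entries increase down each column. -/
def ColStd (a n : ℕ) (p : ℕ → ℕ × ℕ) : Prop :=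
  ∀ k ∈ Finset.Icc (a+1) (a+n), ∀ l ∈ Finset.Icc (a+1) (a+n),
    colT p k = colT p l → rowT p k < rowT p l → k < l

/-- Entries increase along each row. -/
def RowStd (a n : ℕ) (p : ℕ → ℕ × ℕ) : Prop :=
  ∀ k ∈ Finset.Icc (a+1) (a+n), ∀ l ∈ Finset.Icc (a+1) (a+n),
    rowT p k = rowT p l → colT p k < colT p l → k < l

/-- Standard skew tableau of shape `lam/mu` with entries `a+1, …, a+n`. -/
def IsStdSkew (lam mu : ℕ → ℕ) (a n : ℕ) (p : ℕ → ℕ × ℕ) : Prop :=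
  IsSkewTab lam mu a n p ∧ ColStd a n p ∧ RowStd a n p

/-- Standard `lam`-tableau with entries `1, …, n`. -/
def IsStd (lam : ℕ → ℕ) (n : ℕ) (p : ℕ → ℕ × ℕ) : Prop :=
  IsStdSkew lam (fun _ => 0) 0 n p

/-- Column standard straight-shape `lam`-tableau. -/
def IsColStdTab (lam : ℕ → ℕ) (n : ℕ) (p : ℕ → ℕ × ℕ) : Prop :=
  IsTab lam n p ∧ ColStd 0 n p

/-- `i ∈ D(p)`: a descent, `col(i) ≥ col(i+1)`. -/
def inD (a n : ℕ) (p : ℕ → ℕ × ℕ) (i : ℕ) : Prop :=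
  a + 1 ≤ i ∧ i + 1 ≤ a + n ∧ colT p (i+1) ≤ colT p i
/-- `i ∈ SD(p)`: a strong descent, `col(i) > col(i+1)`. -/
def inSD (a n : ℕ) (p : ℕ → ℕ × ℕ) (i : ℕ) : Prop :=
  a + 1 ≤ i ∧ i + 1 ≤ a + n ∧ colT p (i+1) < colT p i
/-- `i ∈ WD(p)`: a weak descent, `col(i) = col(i+1)`. -/
def inWD (a n : ℕ) (p : ℕ → ℕ × ℕ) (i : ℕ) : Prop :=
  a + 1 ≤ i ∧ i + 1 ≤ a + n ∧ colT p (i+1) = colT p i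
/-- `i ∈ A(p)`: an ascent, `col(i) < col(i+1)`. -/
def inA (a n : ℕ) (p : ℕ → ℕ × ℕ) (i : ℕ) : Prop :=
  a + 1 ≤ i ∧ i + 1 ≤ a + n ∧ colT p i < colT p (i+1)
/-- `i ∈ SA(p)`: a strong ascent, `row(i) > row(i+1)`. -/
def inSA (a n : ℕ) (p : ℕ → ℕ × ℕ) (i : ℕ) : Prop :=
  a + 1 ≤ i ∧ i + 1 ≤ a + n ∧ rowT p (i+1) < rowT p i

/-- Descent set of a tableau with entries `1, …, n`. -/
def Dset (n : ℕ) (p : ℕ → ℕ × ℕ) : Set ℕ := {i | inD 0 n p i}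

/-- Shape of the restriction of `p` to entries `≤ m`: the number of boxes
of column `j` occupied by entries `≤ m`. -/
def resShape (p : ℕ → ℕ × ℕ) (m j : ℕ) : ℕ :=
  ((Finset.Icc 1 m).filter (fun k => colT p k = j)).card

/-- Extended dominance order on standard tableaux with `n` boxes: `u ≤ t`. -/
def ExtDomLe (n : ℕ) (pu pt : ℕ → ℕ × ℕ) : Prop :=
  ∀ m ∈ Finset.Icc 1 n, Dominates (fun j => resShape pt m j) (fun j => resShape pu m j)

/-- `i` is the restriction number of `(u,t)`: the restrictions to entries `≤ i`
agree, and `i` is maximal with this property. -/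
def RestNum (n : ℕ) (pu pt : ℕ → ℕ × ℕ) (i : ℕ) : Prop :=
  i ≤ n ∧ (∀ k, 1 ≤ k → k ≤ i → pu k = pt k) ∧ (i = n ∨ pu (i+1) ≠ pt (i+1))

/-- `(u,t)` is favourable with restriction number `i`:
`i` lies in the symmetric difference `D(u) ⊕ D(t)`. -/
def Favourable (n : ℕ) (pu pt : ℕ → ℕ × ℕ) (i : ℕ) : Prop :=
  RestNum n pu pt i ∧
    ((inD 0 n pu i ∧ ¬ inD 0 n pt i) ∨ (inD 0 n pt i ∧ ¬ inD 0 n pu i))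

/-- Dual Knuth move of the first kind of index `k` from `u` to `t`,
on standard tableaux of shape `lam`:  `t = s_k u` with
`D(u) ∩ {k-1,k} = {k-1}` and `D(t) ∩ {k-1,k} = {k}`. -/
def DK1 (lam : ℕ → ℕ) (n : ℕ) (pu pt : ℕ → ℕ × ℕ) (k : ℕ) : Prop :=
  IsStd lam n pu ∧ IsStd lam n pt ∧ 2 ≤ k ∧
  (∀ m, pt m = pu (Equiv.swap k (k+1) m)) ∧
  inD 0 n pu (k-1) ∧ ¬ inD 0 n pu k ∧ inD 0 n pt k ∧ ¬ inD 0 n pt (k-1)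

/-- Dual Knuth move of the second kind of index `k` from `u` to `t`:
`t = s_k u` with `D(u) ∩ {k,k+1} = {k+1}` and `D(t) ∩ {k,k+1} = {k}`. -/
def DK2 (lam : ℕ → ℕ) (n : ℕ) (pu pt : ℕ → ℕ × ℕ) (k : ℕ) : Prop :=
  IsStd lam n pu ∧ IsStd lam n pt ∧ k + 2 ≤ n ∧
  (∀ m, pt m = pu (Equiv.swap k (k+1) m)) ∧
  inD 0 n pu (k+1) ∧ ¬ inD 0 n pu k ∧ inD 0 n pt k ∧ ¬ inD 0 n pt (k+1)

/-- A dual Knuth move (of either kind) of index `k` from `u` to `t`. -/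
def DKMove (lam : ℕ → ℕ) (n : ℕ) (pu pt : ℕ → ℕ × ℕ) (k : ℕ) : Prop :=
  DK1 lam n pu pt k ∨ DK2 lam n pu pt k

/-- A paired dual Knuth move: a dual Knuth move of the same kind and the same
index applied simultaneously to both components of a pair. -/
def PairedDKMove (mu lam : ℕ → ℕ) (n : ℕ)
    (a b : (ℕ → ℕ × ℕ) × (ℕ → ℕ × ℕ)) : Prop :=
  ∃ k, (DK1 mu n a.1 b.1 k ∧ DK1 lam n a.2 b.2 k) ∨
       (DK2 mu n a.1 b.1 k ∧ DK2 lam n a.2 b.2 k)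

/-- Paired dual Knuth equivalence: the equivalence relation generated by
paired dual Knuth moves. -/
def PairedDKEquiv (mu lam : ℕ → ℕ) (n : ℕ)
    (a b : (ℕ → ℕ × ℕ) × (ℕ → ℕ × ℕ)) : Prop :=
  Relation.ReflTransGen
    (fun x y => PairedDKMove mu lam n x y ∨ PairedDKMove mu lam n y x) a b

/-- Lexicographic order on same-shape column standard tableaux: `u <_lex t`. -/
def LexLT (n : ℕ) (pu pt : ℕ → ℕ × ℕ) : Prop :=
  ∃ l, 1 ≤ l ∧ l ≤ n ∧ colT pt l < colT pu l ∧
    ∀ m, l < m → m ≤ n → colT pt m = colT pu m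

/-- `w` is a permutation of `[1,n]`, fixing all other natural numbers. -/
def IsPermOf (n : ℕ) (w : ℕ → ℕ) : Prop :=
  (∀ k ∈ Finset.Icc 1 n, w k ∈ Finset.Icc 1 n) ∧
  (∀ k ∈ Finset.Icc 1 n, ∀ l ∈ Finset.Icc 1 n, w k = w l → k = l) ∧
  (∀ k, k ∉ Finset.Icc 1 n → w k = k)

/-- The Coxeter length of `w ∈ S_n`: the number of inversions. -/
def lenInv (n : ℕ) (w : ℕ → ℕ) : ℕ :=
  ((Finset.Icc 1 n ×ˢ Finset.Icc 1 n).filter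
    (fun q => q.1 < q.2 ∧ w q.2 < w q.1)).card

/-- One step of the Bruhat order on `S_n`: `y = (i j) ∘ x` (so `y x⁻¹` is a
reflection) with `l(x) < l(y)`. -/
def BruhatStep (n : ℕ) (x y : ℕ → ℕ) : Prop :=
  lenInv n x < lenInv n y ∧
  ∃ i j, 1 ≤ i ∧ i < j ∧ j ≤ n ∧ ∀ k, y k = Equiv.swap i j (x k)

/-- The Bruhat order on `S_n`. -/
def BruhatLe (n : ℕ) (x y : ℕ → ℕ) : Prop :=
  Relation.ReflTransGen (BruhatStep n) x y

/-- One step of the left weak order on `S_n`: `y = s_i ∘ x` with `l(x) < l(y)`. -/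
def WeakStep (n : ℕ) (x y : ℕ → ℕ) : Prop :=
  lenInv n x < lenInv n y ∧
  ∃ i, 1 ≤ i ∧ i + 1 ≤ n ∧ ∀ k, y k = Equiv.swap i (i+1) (x k)

/-- The left weak order on `S_n`. -/
def WeakLe (n : ℕ) (x y : ℕ → ℕ) : Prop :=
  Relation.ReflTransGen (WeakStep n) x y

/-- `ptau` is (the position function of) the column superstandard tableau
`τ_lam`: column standard, with the columns filled in order from left to right. -/
def IsSuperstandard (lam : ℕ → ℕ) (n : ℕ) (ptau : ℕ → ℕ × ℕ) : Prop :=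
  IsTab lam n ptau ∧ ColStd 0 n ptau ∧
  ∀ k, 1 ≤ k → k + 1 ≤ n → colT ptau k ≤ colT ptau (k+1)

/-- `w = perm(t)`, i.e. `w · τ_lam = t`: for each `k`, the box of `τ_lam`
containing `k` contains `w k` in `t`. -/
def IsPermTab (n : ℕ) (ptau pt : ℕ → ℕ × ℕ) (w : ℕ → ℕ) : Prop :=
  IsPermOf n w ∧ ∀ k ∈ Finset.Icc 1 n, pt (w k) = ptau k

/-- `p` (a standard skew tableau of shape `lam/mu` with entries `a+1, …, a+n`)
is the `(a+1)`-critical tableau: writing `m = a+1`, the entry `m` lies in the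
first nonempty column `i` of the skew diagram, `m+1` lies in column `i+1`,
and the restriction to entries `> m+1` is minimal (no strong descents). -/
def IsCritical (lam mu : ℕ → ℕ) (a n : ℕ) (p : ℕ → ℕ × ℕ) : Prop :=
  IsStdSkew lam mu a n p ∧
  (∀ j, 1 ≤ j → j < colT p (a+1) → lam j ≤ mu j) ∧
  mu (colT p (a+1)) < lam (colT p (a+1)) ∧
  colT p (a+2) = colT p (a+1) + 1 ∧
  ∀ i, a + 3 ≤ i → i + 1 ≤ a + n → colT p i ≤ colT p (i+1)

/-- The box `c` is removable from the diagram of `lam`. -/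
def Removable (lam : ℕ → ℕ) (c : ℕ × ℕ) : Prop :=
  1 ≤ c.2 ∧ c.1 = lam c.2 ∧ lam (c.2 + 1) < c.1

/-- One step of a jeu de taquin slide on a filling `p` with entries `1, …, n`:
the hole moves from `b` to `b'`, where `b'` is the box (below or to the right
of `b`) containing the smaller entry `x` among the occupied candidates, and the
filling is updated by moving `x` into `b`. -/
def SlideStep (n : ℕ) (p : ℕ → ℕ × ℕ) (b : ℕ × ℕ)
    (p' : ℕ → ℕ × ℕ) (b' : ℕ × ℕ) : Prop :=
  ∃ x, 1 ≤ x ∧ x ≤ n ∧ p x = b' ∧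
    (b' = (b.1 + 1, b.2) ∨ b' = (b.1, b.2 + 1)) ∧
    (∀ y, 1 ≤ y → y ≤ n → (p y = (b.1 + 1, b.2) ∨ p y = (b.1, b.2 + 1)) → x ≤ y) ∧
    (∀ y, p' y = if y = x then b else p y)

/-- `lam/mu` is a skew partition of `n`. -/
def IsSkewShape (n : ℕ) (lam mu : ℕ → ℕ) : Prop :=
  (∃ m, IsPartition (m + n) lam ∧ IsPartition m mu) ∧ ∀ j, mu j ≤ lam j



/- ===================== auxiliary lemmas ===================== -/

lemma aux_prodext {p q : ℕ × ℕ} (h1 : p.1 = q.1) (h2 : p.2 = q.2) : p = q := by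
  cases p; cases q; simp_all

/-- In a standard tableau, the number of entries in column `c` is `lam c`. -/
lemma aux_col_card (lam : ℕ → ℕ) (n : ℕ) (p : ℕ → ℕ × ℕ)
    (h : IsSkewTab lam (fun _ => 0) 0 n p) (c : ℕ) (hc : 1 ≤ c) :
    ((Finset.Icc 1 n).filter (fun j => colT p j = c)).card = lam c := by
  obtain ⟨h1, h2, h3⟩ := h
  simp only [zero_add] at h1 h2 h3
  rw [show lam c = (Finset.Icc 1 (lam c)).card by simp]
  apply Finset.card_bij (fun j _ => rowT p j)
  · intro a ha
    simp only [Finset.mem_filter] at ha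
    have hb := h1 a ha.1
    have hb1 : 0 < rowT p a := hb.2.1
    have hb2 : rowT p a ≤ lam (colT p a) := hb.2.2
    have hc2 : colT p a = c := ha.2
    rw [hc2] at hb2
    simp only [Finset.mem_Icc]
    omega
  · intro a ha b hb hab
    simp only [Finset.mem_filter] at ha hb
    apply h2 a ha.1 b hb.1
    have hcc : colT p a = colT p b := by rw [ha.2, hb.2]
    exact aux_prodext hab hcc
  · intro r hr
    simp only [Finset.mem_Icc] at hr
    obtain ⟨j, hj, hpj⟩ := h3 (r, c) (by exact hc) (by exact hr.1) (by exact hr.2)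
    refine ⟨j, ?_, ?_⟩
    · simp only [Finset.mem_filter]
      exact ⟨hj, by simp [colT, hpj]⟩
    · simp [rowT, hpj]

/-- Number of entries in columns `≤ k` equals the partial sum. -/
lemma aux_col_card_le (lam : ℕ → ℕ) (n : ℕ) (p : ℕ → ℕ × ℕ)
    (h : IsSkewTab lam (fun _ => 0) 0 n p) (k : ℕ) :
    ((Finset.Icc 1 n).filter (fun j => colT p j ≤ k)).card = psum lam k := by
  have h1 := h.1
  simp only [zero_add] at h1
  rw [psum]
  rw [Finset.card_eq_sum_card_fiberwise (f := colT p) (t := Finset.Icc 1 k)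
    (fun j hj => by
      simp only [Finset.mem_coe, Finset.mem_filter] at hj
      simp only [Finset.mem_coe, Finset.mem_Icc]
      exact ⟨(h1 j hj.1).1, hj.2⟩)]
  apply Finset.sum_congr rfl
  intro c hcm
  simp only [Finset.mem_Icc] at hcm
  rw [Finset.filter_filter]
  rw [← aux_col_card lam n p h c hcm.1]
  congr 1
  apply Finset.filter_congr
  intro j _
  constructor
  · exact fun hh => hh.2
  · exact fun hh => ⟨by rw [hh]; exact hcm.2, hh⟩

/-- In a standard tableau of partition shape, a descent forces a strict row increase. -/
lemma aux_descent_row_lt (mu : ℕ → ℕ) (n : ℕ) (pu : ℕ → ℕ × ℕ)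
    (hmono : ∀ i j, 1 ≤ i → i ≤ j → mu j ≤ mu i)
    (hu : IsStdSkew mu (fun _ => 0) 0 n pu)
    (j : ℕ) (hj1 : 1 ≤ j) (hj2 : j + 1 ≤ n)
    (hcol : colT pu (j+1) ≤ colT pu j) : rowT pu j < rowT pu (j+1) := by
  obtain ⟨⟨h1, h2, h3⟩, hcs, hrs⟩ := hu
  simp only [ColStd, RowStd, zero_add] at h1 h2 h3 hcs hrs
  have hjm : j ∈ Finset.Icc 1 n := Finset.mem_Icc.mpr ⟨hj1, by omega⟩
  have hjm1 : j + 1 ∈ Finset.Icc 1 n := Finset.mem_Icc.mpr ⟨by omega, hj2⟩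
  by_contra hle
  push_neg at hle
  rcases eq_or_lt_of_le hcol with heq | hlt
  · rcases eq_or_lt_of_le hle with hre | hre
    · have : pu (j+1) = pu j := aux_prodext hre heq
      have := h2 _ hjm1 _ hjm this
      omega
    · have := hcs _ hjm1 _ hjm heq hre
      omega
  · have hb1 := h1 j hjm
    have hb2 := h1 (j+1) hjm1
    have hb1a : 0 < rowT pu j := hb1.2.1
    have hb1b : rowT pu j ≤ mu (colT pu j) := hb1.2.2
    have hb2a : 1 ≤ colT pu (j+1) := hb2.1
    have hrc : rowT pu j ≤ mu (colT pu (j+1)) := by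
      have := hmono (colT pu (j+1)) (colT pu j) hb2a (le_of_lt hlt)
      omega
    obtain ⟨e, he, hpe⟩ := h3 (rowT pu j, colT pu (j+1)) (by exact hb2a) (by exact hb1a)
      (by exact hrc)
    have hpe1 : rowT pu e = rowT pu j := by simp [rowT, hpe]
    have hpe2 : colT pu e = colT pu (j+1) := by simp [colT, hpe]
    have hej : e < j := hrs _ he _ hjm hpe1 (by omega)
    rcases eq_or_lt_of_le hle with hre | hre
    · have : pu (j+1) = pu e := aux_prodext
        (show rowT pu (j+1) = rowT pu e by omega) (show colT pu (j+1) = colT pu e by omega)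
      have := h2 _ hjm1 _ he this
      omega
    · have := hcs _ hjm1 _ he (by omega) (by omega)
      omega

/-- Key counting lemma: if `S ⊆ [1,n]` carries a labelling `g` into `[1,k]`
injective on each row of `u`, then `|S| ≤ μ₁ + ⋯ + μ_k`. -/
lemma aux_count (n k : ℕ) (mu : ℕ → ℕ)
    (hmono : ∀ i j, 1 ≤ i → i ≤ j → mu j ≤ mu i)
    (pu : ℕ → ℕ × ℕ) (hsk : IsSkewTab mu (fun _ => 0) 0 n pu)
    (g : ℕ → ℕ) (S : Finset ℕ) (hS : S ⊆ Finset.Icc 1 n)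
    (hg1 : ∀ j ∈ S, 1 ≤ g j ∧ g j ≤ k)
    (hginj : ∀ j ∈ S, ∀ j' ∈ S, g j = g j' → rowT pu j = rowT pu j' → j = j') :
    S.card ≤ psum mu k := by
  obtain ⟨h1, h2, h3⟩ := hsk
  simp only [zero_add] at h1 h2 h3
  classical
  set B : Finset (ℕ × ℕ) :=
    (Finset.Icc 1 k).biUnion (fun c => (Finset.Icc 1 (mu c)).image (fun r => (r, c))) with hB
  have hBcard : B.card = psum mu k := by
    rw [hB, Finset.card_biUnion]
    · rw [psum]
      apply Finset.sum_congr rfl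
      intro c _
      have hinj : Function.Injective (fun r : ℕ => (r, c)) := by
        intro r r' h
        simpa using congrArg Prod.fst h
      rw [Finset.card_image_of_injective _ hinj]
      simp
    · intro c _ c' _ hcc
      simp only [Finset.disjoint_left, Finset.mem_image]
      rintro a ⟨r, _, rfl⟩ ⟨r', _, h⟩
      have hcs : c' = c := by simpa using congrArg Prod.snd h
      exact hcc hcs.symm
  rw [← hBcard]
  refine Finset.card_le_card_of_injOn
    (fun j => (rowT pu j, (S.filter (fun j' => rowT pu j' = rowT pu j ∧ g j' < g j)).card + 1))
    ?_ ?_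
  · -- maps into B
    intro j hj
    dsimp only
    have hjn := hS hj
    have hbj := h1 j hjn
    have hbj1 : 0 < rowT pu j := hbj.2.1
    set rk := (S.filter (fun j' => rowT pu j' = rowT pu j ∧ g j' < g j)).card with hrk
    have hrk_lt : rk + 1 ≤ g j := by
      have hcle : (S.filter (fun j' => rowT pu j' = rowT pu j ∧ g j' < g j)).card
          ≤ (Finset.Icc 1 (g j - 1)).card := by
        apply Finset.card_le_card_of_injOn g
        · intro x hx
          simp only [Finset.mem_coe, Finset.mem_filter] at hx
          have := hg1 x hx.1
          simp only [Finset.mem_coe, Finset.mem_Icc]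
          omega
        · intro x hx y hy hxy
          simp only [Finset.mem_coe, Finset.mem_filter] at hx hy
          exact hginj x hx.1 y hy.1 hxy (by rw [hx.2.1, hy.2.1])
      simp only [Nat.card_Icc] at hcle
      have hgj := (hg1 j hj).1
      omega
    have hrkk : rk + 1 ≤ k := le_trans hrk_lt (hg1 j hj).2
    have hsub : (S.filter (fun j' => rowT pu j' = rowT pu j ∧ g j' < g j)) ⊂
        (S.filter (fun j' => rowT pu j' = rowT pu j)) := by
      constructor
      · intro x hx
        simp only [Finset.mem_filter] at hx ⊢
        exact ⟨hx.1, hx.2.1⟩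
      · intro hcon
        have hmem : j ∈ (S.filter (fun j' => rowT pu j' = rowT pu j ∧ g j' < g j)) := by
          apply hcon
          exact Finset.mem_filter.mpr ⟨hj, rfl⟩
        simp only [Finset.mem_filter] at hmem
        omega
    have hm : rk + 1 ≤ (S.filter (fun j' => rowT pu j' = rowT pu j)).card :=
      Finset.card_lt_card hsub
    set m := (S.filter (fun j' => rowT pu j' = rowT pu j)).card with hmdef
    have hm1 : 1 ≤ m := by omega
    have hmu_m : rowT pu j ≤ mu m := by
      by_contra hcon
      push_neg at hcon
      have hcle : (S.filter (fun j' => rowT pu j' = rowT pu j)).card ≤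
          (Finset.Icc 1 (m - 1)).card := by
        apply Finset.card_le_card_of_injOn (colT pu)
        · intro x hx
          simp only [Finset.mem_coe, Finset.mem_filter] at hx
          have hxn := hS hx.1
          have hbx := h1 x hxn
          have hrx : rowT pu x ≤ mu (colT pu x) := hbx.2.2
          have hcx : 1 ≤ colT pu x := hbx.1
          simp only [Finset.mem_coe, Finset.mem_Icc]
          refine ⟨hcx, ?_⟩
          by_contra hcx2
          push_neg at hcx2
          have : mu (colT pu x) ≤ mu m := hmono m (colT pu x) hm1 (by omega)
          rw [hx.2] at hrx
          omega
        · intro x hx y hy hxy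
          simp only [Finset.mem_coe, Finset.mem_filter] at hx hy
          have : pu x = pu y := aux_prodext
            (show rowT pu x = rowT pu y by rw [hx.2, hy.2]) hxy
          exact h2 x (hS hx.1) y (hS hy.1) this
      simp only [Nat.card_Icc] at hcle
      omega
    have hmu_rk : rowT pu j ≤ mu (rk + 1) := by
      have := hmono (rk + 1) m (by omega) hm
      omega
    rw [hB]
    simp only [Finset.mem_coe, Finset.mem_biUnion, Finset.mem_image, Finset.mem_Icc]
    exact ⟨rk + 1, ⟨by omega, hrkk⟩, rowT pu j, ⟨by omega, hmu_rk⟩, rfl⟩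
  · -- injective on S
    intro x hx y hy hxy
    simp only [Finset.mem_coe] at hx hy
    simp only [Prod.mk.injEq] at hxy
    have hrow : rowT pu x = rowT pu y := hxy.1
    have hcard : (S.filter (fun j' => rowT pu j' = rowT pu x ∧ g j' < g x)).card =
        (S.filter (fun j' => rowT pu j' = rowT pu y ∧ g j' < g y)).card := by
      have := hxy.2
      omega
    have hgeq : g x = g y := by
      rcases lt_trichotomy (g x) (g y) with h | h | h
      · exfalso
        have hss : (S.filter (fun j' => rowT pu j' = rowT pu x ∧ g j' < g x)) ⊂
            (S.filter (fun j' => rowT pu j' = rowT pu y ∧ g j' < g y)) := by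
          constructor
          · intro z hz
            simp only [Finset.mem_filter] at hz ⊢
            exact ⟨hz.1, by rw [← hrow]; exact hz.2.1, by omega⟩
          · intro hcon
            have hmem : x ∈ (S.filter (fun j' => rowT pu j' = rowT pu x ∧ g j' < g x)) := by
              apply hcon
              simp only [Finset.mem_filter]
              exact ⟨hx, hrow, h⟩
            simp only [Finset.mem_filter] at hmem
            omega
        have := Finset.card_lt_card hss
        omega
      · exact h
      · exfalso
        have hss : (S.filter (fun j' => rowT pu j' = rowT pu y ∧ g j' < g y)) ⊂
            (S.filter (fun j' => rowT pu j' = rowT pu x ∧ g j' < g x)) := by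
          constructor
          · intro z hz
            simp only [Finset.mem_filter] at hz ⊢
            exact ⟨hz.1, by rw [hrow]; exact hz.2.1, by omega⟩
          · intro hcon
            have hmem : y ∈ (S.filter (fun j' => rowT pu j' = rowT pu y ∧ g j' < g y)) := by
              apply hcon
              simp only [Finset.mem_filter]
              exact ⟨hy, hrow.symm, h⟩
            simp only [Finset.mem_filter] at hmem
            omega
        have := Finset.card_lt_card hss
        omega
    exact hginj x hx y hy hgeq hrow

/-- if `t` is `1`-minimal with respect to `u`
then `μ < λ` in the dominance order. -/
theorem one_minimal_dominance (n : ℕ) (hn : 2 ≤ n) (mu lam : ℕ → ℕ)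
    (hmu : IsPartition n mu) (hlam : IsPartition n lam)
    (pu pt : ℕ → ℕ × ℕ) (hu : IsStd mu n pu) (ht : IsStd lam n pt)
    (hres : RestNum n pu pt 1)
    (hD : Dset n pt ⊂ Dset n pu)
    (hcrit : IsCritical lam (fun _ => 0) 0 n pt) :
    Dominates lam mu ∧ mu ≠ lam := by
  classical
  have hu' := hu
  have ht' := ht
  obtain ⟨⟨hu1, hu2, hu3⟩, hucs, hurs⟩ := hu'
  obtain ⟨⟨ht1, ht2, ht3⟩, htcs, htrs⟩ := ht'
  simp only [zero_add] at hu1 hu2 hu3 ht1 ht2 ht3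
  simp only [ColStd, RowStd, zero_add] at hucs hurs htcs htrs
  obtain ⟨_, hle1, hpos1, hcol2, hmono3⟩ := hcrit
  simp only [zero_add] at hle1 hpos1 hcol2 hmono3
  obtain ⟨⟨hmu0, Nm, hNm, hNmsum⟩, hmuanti⟩ := hmu
  obtain ⟨⟨hlam0, Nl, hNl, hNlsum⟩, hlamanti⟩ := hlam
  have h1m : (1:ℕ) ∈ Finset.Icc 1 n := Finset.mem_Icc.mpr ⟨le_rfl, by omega⟩
  have h2m : (2:ℕ) ∈ Finset.Icc 1 n := Finset.mem_Icc.mpr ⟨by omega, hn⟩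
  -- λ₁ ≥ 1
  have hlam1 : 1 ≤ lam 1 := by
    by_contra hcon
    push_neg at hcon
    have hz : ∀ i ∈ Finset.Icc 1 Nl, lam i = 0 := by
      intro i hi
      simp only [Finset.mem_Icc] at hi
      have := hlamanti 1 i le_rfl hi.1
      omega
    have : psum lam Nl = 0 := by
      rw [psum]; exact Finset.sum_eq_zero hz
    omega
  -- column of 1 in t is 1
  have hct1 : colT pt 1 = 1 := by
    have hge : 1 ≤ colT pt 1 := (ht1 1 h1m).1
    by_contra hcon
    have h2c : 1 < colT pt 1 := by omega
    have := hle1 1 le_rfl h2c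
    omega
  have hct2 : colT pt 2 = 2 := by
    rw [hcol2, hct1]
  -- position of 1 in t
  have hpt1 : pt 1 = (1, 1) := by
    have hr1 : rowT pt 1 = 1 := by
      by_contra hcon
      have hb := ht1 1 h1m
      have hb1 : 0 < rowT pt 1 := hb.2.1
      have hr2 : 2 ≤ rowT pt 1 := by omega
      obtain ⟨e, he, hpe⟩ := ht3 (1, 1) (by exact le_rfl) (by exact Nat.one_pos)
        (by exact hlam1)
      have hce : colT pt e = colT pt 1 := by
        show (pt e).2 = colT pt 1
        rw [hpe, hct1]
      have hre : rowT pt e < rowT pt 1 := by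
        have h : rowT pt e = 1 := by simp [rowT, hpe]
        omega
      have := htcs e he 1 h1m hce hre
      have he1 : 1 ≤ e := (Finset.mem_Icc.mp he).1
      omega
    exact aux_prodext hr1 hct1
  -- position of 2 in t
  have hpt2 : pt 2 = (1, 2) := by
    have hb := ht1 2 h2m
    have hb1 : 0 < rowT pt 2 := hb.2.1
    have hr1 : rowT pt 2 = 1 := by
      by_contra hcon
      have hr2 : 2 ≤ rowT pt 2 := by omega
      have hlam2 : 1 ≤ lam 2 := by
        have hb2 : rowT pt 2 ≤ lam (colT pt 2) := hb.2.2
        rw [hct2] at hb2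
        omega
      obtain ⟨e, he, hpe⟩ := ht3 (1, 2) (by exact one_le_two) (by exact Nat.one_pos)
        (by exact hlam2)
      have hce : colT pt e = colT pt 2 := by
        show (pt e).2 = colT pt 2
        rw [hpe, hct2]
      have hre : rowT pt e < rowT pt 2 := by
        have h : rowT pt e = 1 := by simp [rowT, hpe]
        omega
      have := htcs e he 2 h2m hce hre
      have he1 : 1 ≤ e := (Finset.mem_Icc.mp he).1
      have he1' : e = 1 := by omega
      rw [he1', hpt1] at hpe
      have hx : (1:ℕ) = 2 := congrArg Prod.snd hpe
      omega
    exact aux_prodext hr1 hct2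
  -- position of 1 and 2 in u
  have hpu1 : pu 1 = (1, 1) := by
    rw [hres.2.1 1 le_rfl le_rfl, hpt1]
  have hpu2ne : pu 2 ≠ pt 2 := by
    rcases hres.2.2 with h | h
    · omega
    · exact h
  have hpu2 : pu 2 = (2, 1) := by
    have hb := hu1 2 h2m
    have hc1 : 1 ≤ colT pu 2 := hb.1
    have hr0 : 0 < rowT pu 2 := hb.2.1
    have hrmu : rowT pu 2 ≤ mu (colT pu 2) := hb.2.2
    rcases Nat.lt_or_ge (colT pu 2) 2 with hc2 | hc2
    · -- column 1
      rcases Nat.lt_or_ge (rowT pu 2) 3 with hr3 | hr3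
      · have hne1 : rowT pu 2 ≠ 1 := by
          intro hreq
          have : pu 2 = pu 1 := by
            rw [hpu1]
            exact aux_prodext (show rowT pu 2 = 1 by omega) (show colT pu 2 = 1 by omega)
          have := hu2 2 h2m 1 h1m this
          omega
        exact aux_prodext (show rowT pu 2 = 2 by omega) (show colT pu 2 = 1 by omega)
      · -- row ≥ 3 impossible
        exfalso
        have hmu12 : 2 ≤ mu 1 := by
          have h' : colT pu 2 = 1 := by omega
          rw [h'] at hrmu
          omega
        obtain ⟨e, he, hpe⟩ := hu3 (2, 1) (by exact le_rfl) (by exact Nat.zero_lt_two)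
          (by exact hmu12)
        have hce : colT pu e = colT pu 2 := by
          show (pu e).2 = colT pu 2
          rw [hpe]
          omega
        have hre : rowT pu e < rowT pu 2 := by
          have h : rowT pu e = 2 := by simp [rowT, hpe]
          omega
        have := hucs e he 2 h2m hce hre
        have he1 : 1 ≤ e := (Finset.mem_Icc.mp he).1
        have he1' : e = 1 := by omega
        rw [he1', hpu1] at hpe
        have hx : (1:ℕ) = 2 := congrArg Prod.fst hpe
        omega
    · -- column ≥ 2 impossible
      exfalso
      rcases Nat.lt_or_ge (rowT pu 2) 2 with hr2 | hr2
      · -- row 1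
        have hreq : rowT pu 2 = 1 := by omega
        have hcne : colT pu 2 ≠ 2 := by
          intro h
          apply hpu2ne
          rw [hpt2]
          exact aux_prodext (show rowT pu 2 = 1 by omega) (show colT pu 2 = 2 by omega)
        have hmu2 : 1 ≤ mu 2 := by
          have := hmuanti 2 (colT pu 2) one_le_two (by omega)
          omega
        obtain ⟨e, he, hpe⟩ := hu3 (1, 2) (by exact one_le_two) (by exact Nat.one_pos)
          (by exact hmu2)
        have hre : rowT pu e = rowT pu 2 := by
          have h : rowT pu e = 1 := by simp [rowT, hpe]
          omega
        have hce : colT pu e < colT pu 2 := by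
          have h : colT pu e = 2 := by simp [colT, hpe]
          omega
        have := hurs e he 2 h2m hre hce
        have he1 : 1 ≤ e := (Finset.mem_Icc.mp he).1
        have he1' : e = 1 := by omega
        rw [he1', hpu1] at hpe
        have hx : (1:ℕ) = 2 := congrArg Prod.snd hpe
        omega
      · -- row ≥ 2 : box (1, c)
        have hmuc : 1 ≤ mu (colT pu 2) := by omega
        obtain ⟨e, he, hpe⟩ := hu3 (1, colT pu 2) (by exact hc1) (by exact Nat.one_pos)
          (by exact hmuc)
        have hce : colT pu e = colT pu 2 := by simp [colT, hpe]
        have hre : rowT pu e < rowT pu 2 := by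
          have h : rowT pu e = 1 := by simp [rowT, hpe]
          omega
        have := hucs e he 2 h2m hce hre
        have he1 : 1 ≤ e := (Finset.mem_Icc.mp he).1
        have he1' : e = 1 := by omega
        rw [he1', hpu1] at hpe
        have h2 : (1:ℕ) = colT pu 2 := congrArg Prod.snd hpe
        omega
  have hcpu1 : colT pu 1 = 1 := by simp [colT, hpu1]
  have hcpu2 : colT pu 2 = 1 := by simp [colT, hpu2]
  -- the chain labelling
  set g : ℕ → ℕ := fun j => if j = 2 then 1 else colT pt j with hg
  have hg2 : g 2 = 1 := by simp [hg]
  have hgne : ∀ j, j ≠ 2 → g j = colT pt j := by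
    intro j hj
    simp [hg, hj]
  have hg1v : g 1 = 1 := by rw [hgne 1 (by omega), hct1]
  have hgpos : ∀ j, 1 ≤ j → j ≤ n → 1 ≤ g j := by
    intro j hj1 hj2
    rcases eq_or_ne j 2 with h | h
    · rw [h, hg2]
    · rw [hgne j h]
      exact (ht1 j (Finset.mem_Icc.mpr ⟨hj1, hj2⟩)).1
  have hgstep : ∀ j, 1 ≤ j → j + 1 ≤ n → g j ≤ g (j + 1) := by
    intro j hj1 hj2
    rcases eq_or_ne j 1 with h1 | h1
    · subst h1
      rw [hg1v]
      exact hgpos 2 one_le_two (by omega)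
    rcases eq_or_ne j 2 with h2 | h2
    · subst h2
      rw [hg2]
      exact hgpos 3 (by omega) (by omega)
    · rw [hgne j h2, hgne (j+1) (by omega)]
      exact hmono3 j (by omega) (by omega)
  have hgmono : ∀ d j, 1 ≤ j → j + d ≤ n → g j ≤ g (j + d) := by
    intro d
    induction d with
    | zero => intro j _ _; simp
    | succ d ih =>
      intro j hj1 hj2
      have e1 : g j ≤ g (j + d) := ih j hj1 (by omega)
      have e2 : g (j + d) ≤ g (j + d + 1) := hgstep (j + d) (by omega) (by omega)
      have e3 : j + (d + 1) = j + d + 1 := rfl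
      rw [e3]
      omega
  have hDsub : ∀ i, inD 0 n pt i → inD 0 n pu i := fun i hi => hD.subset hi
  have hstep : ∀ j, 1 ≤ j → j + 1 ≤ n → g j = g (j + 1) → rowT pu j < rowT pu (j + 1) := by
    intro j hj1 hj2 hgj
    have hcol : colT pu (j + 1) ≤ colT pu j := by
      rcases eq_or_ne j 1 with h1 | h1
      · subst h1
        have : colT pu 2 ≤ colT pu 1 := by omega
        exact this
      rcases eq_or_ne j 2 with h2 | h2
      · subst h2
        have hgj' : g 2 = g 3 := hgj
        have hc3 : colT pt 3 = 1 := by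
          rw [hg2, hgne 3 (by omega)] at hgj'
          omega
        have hd : inD 0 n pt 2 := by
          refine ⟨by omega, by omega, ?_⟩
          show colT pt 3 ≤ colT pt 2
          rw [hc3, hct2]
          omega
        exact (hDsub 2 hd).2.2
      · have hceq : colT pt (j+1) = colT pt j := by
          rw [hgne j h2, hgne (j+1) (by omega)] at hgj
          omega
        have hd : inD 0 n pt j := ⟨by omega, by omega, by omega⟩
        exact (hDsub j hd).2.2
    exact aux_descent_row_lt mu n pu hmuanti hu j hj1 hj2 hcol
  have hrows : ∀ d j, 1 ≤ j → j + d + 1 ≤ n → g j = g (j + d + 1) →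
      rowT pu j < rowT pu (j + d + 1) := by
    intro d
    induction d with
    | zero => intro j a1 a2 a3; exact hstep j a1 a2 a3
    | succ d ih =>
      intro j a1 a2 a3
      have e1 : g j ≤ g (j + 1) := hgstep j a1 (by omega)
      have e2 : g (j + 1) ≤ g (j + 1 + (d + 1)) := hgmono (d + 1) (j + 1) (by omega) (by omega)
      have heq : j + 1 + (d + 1) = j + (d + 1) + 1 := by omega
      rw [heq] at e2
      have hgj1 : g j = g (j + 1) := by omega
      have hgj2 : g (j + 1) = g (j + (d + 1) + 1) := by omega
      have r1 : rowT pu j < rowT pu (j + 1) := hstep j a1 (by omega) hgj1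
      have r2 : rowT pu (j + 1) < rowT pu (j + 1 + d + 1) := by
        apply ih (j + 1) (by omega) (by omega)
        have heq2 : j + 1 + d + 1 = j + (d + 1) + 1 := by omega
        rw [heq2]
        exact hgj2
      have heq3 : j + 1 + d + 1 = j + (d + 1) + 1 := by omega
      rw [heq3] at r2
      omega
  have hrowinj : ∀ j ∈ Finset.Icc 1 n, ∀ j' ∈ Finset.Icc 1 n,
      g j = g j' → rowT pu j = rowT pu j' → j = j' := by
    intro j hj j' hj' hgg hrr
    simp only [Finset.mem_Icc] at hj hj'
    rcases lt_trichotomy j j' with h | h | h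
    · exfalso
      have heq : j + (j' - j - 1) + 1 = j' := by omega
      have := hrows (j' - j - 1) j (by omega) (by omega) (by rw [heq]; exact hgg)
      rw [heq] at this
      omega
    · exact h
    · exfalso
      have heq : j' + (j - j' - 1) + 1 = j := by omega
      have := hrows (j - j' - 1) j' (by omega) (by omega) (by rw [heq]; exact hgg.symm)
      rw [heq] at this
      omega
  -- cardinalities of the chain sets
  have hgcardk : ∀ k, 2 ≤ k →
      ((Finset.Icc 1 n).filter (fun j => g j ≤ k)) =
        ((Finset.Icc 1 n).filter (fun j => colT pt j ≤ k)) := by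
    intro k hk
    apply Finset.filter_congr
    intro j _
    rcases eq_or_ne j 2 with h | h
    · subst h
      rw [hg2, hct2]
      constructor
      · intro _; omega
      · intro _; omega
    · rw [hgne j h]
  have hS1 : ((Finset.Icc 1 n).filter (fun j => g j ≤ 1)) =
      insert 2 ((Finset.Icc 1 n).filter (fun j => colT pt j ≤ 1)) := by
    ext j
    simp only [Finset.mem_insert, Finset.mem_filter]
    constructor
    · rintro ⟨hjm, hgj⟩
      rcases eq_or_ne j 2 with h | h
      · left; exact h
      · right
        refine ⟨hjm, ?_⟩
        rw [hgne j h] at hgj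
        exact hgj
    · rintro (h | ⟨hjm, hcj⟩)
      · subst h
        refine ⟨h2m, ?_⟩
        rw [hg2]
      · refine ⟨hjm, ?_⟩
        rcases eq_or_ne j 2 with h | h
        · rw [h, hg2]
        · rw [hgne j h]; exact hcj
  have h2notmem : 2 ∉ ((Finset.Icc 1 n).filter (fun j => colT pt j ≤ 1)) := by
    simp only [Finset.mem_filter]
    rintro ⟨_, hcj⟩
    rw [hct2] at hcj
    omega
  have hps1lam : psum lam 1 = lam 1 := by
    rw [psum, Finset.Icc_self, Finset.sum_singleton]
  have hps1mu : psum mu 1 = mu 1 := by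
    rw [psum, Finset.Icc_self, Finset.sum_singleton]
  have hcardS1 : ((Finset.Icc 1 n).filter (fun j => g j ≤ 1)).card = lam 1 + 1 := by
    rw [hS1, Finset.card_insert_of_notMem h2notmem, aux_col_card_le lam n pt ht.1 1, hps1lam]
  have hcount : ∀ k, ((Finset.Icc 1 n).filter (fun j => g j ≤ k)).card ≤ psum mu k := by
    intro k
    apply aux_count n k mu hmuanti pu hu.1 g _ (Finset.filter_subset _ _)
    · intro j hj
      simp only [Finset.mem_filter, Finset.mem_Icc] at hj
      exact ⟨hgpos j hj.1.1 hj.1.2, hj.2⟩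
    · intro j hj j' hj' hgg hrr
      simp only [Finset.mem_filter] at hj hj'
      exact hrowinj j hj.1 j' hj'.1 hgg hrr
  constructor
  · intro k
    rcases Nat.eq_zero_or_pos k with h0 | h1
    · subst h0
      rw [psum, psum, Finset.Icc_eq_empty (by omega)]
      simp
    rcases Nat.lt_or_ge k 2 with h2 | h2
    · have hk1 : k = 1 := by omega
      subst hk1
      have := hcount 1
      rw [hcardS1] at this
      omega
    · have := hcount k
      rw [hgcardk k h2, aux_col_card_le lam n pt ht.1 k] at this
      exact this
  · intro hcon
    have := hcount 1
    rw [hcardS1, hps1mu] at this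
    rw [hcon] at this
    omega
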